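/- Let b and b' be two bid profiles that differ only in agent i's bid, such that the strict preference rankings over goods induced by b_i and b'_i are within a partial slide of each other (i.e., b'_i is obtained from b_i by moving a single good to a lower position, keeping the relative order of all other goods). Then for every time step t during the executions of Round-Robin on b and on b', the sets of still-available goods M_t(b) and M_t(b') satisfy |M_t(b) \ M_t(b')| = |M_t(b') \ M_t(b)| ≤ 1. -/

import Mathlib

open Finset

/-- Pick the available good with the highest bid, ties broken lexicographically
(i.e. in favor of the smaller index). -/
noncomputable def rrPick {m : ℕ} (bid : Fin m → ℝ) (S : Finset (Fin m)) : Option (Fin m) :=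
  if h : S.Nonempty then
    some (S.exists_max_image (fun g => toLex (bid g, OrderDual.toDual g)) h).choose
  else none

/-- The state of Round-Robin (available goods, partial allocation) after `t` picks:
at step `t` the active agent is `t % n` and she picks her highest-bid available good. -/
noncomputable def rrState (n : ℕ) [NeZero n] {m : ℕ} (b : Fin n → Fin m → ℝ) :
    ℕ → Finset (Fin m) × (Fin n → Finset (Fin m))
  | 0 => (Finset.univ, fun _ => ∅)
  | (t + 1) =>
    let p := rrState n b t
    let i : Fin n := ⟨t % n, Nat.mod_lt t (Nat.pos_of_ne_zero (NeZero.ne n))⟩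
    match rrPick (b i) p.1 with
    | none => p
    | some g => (p.1.erase g, Function.update p.2 i (insert g (p.2 i)))

/-- The strict preference ranking induced by a bid vector, with ties broken
lexicographically: `g` is preferred to `h` if it has a strictly larger bid, or an equal
bid and a smaller index. -/
def rrPref {m : ℕ} (bid : Fin m → ℝ) (g h : Fin m) : Prop :=
  bid h < bid g ∨ (bid g = bid h ∧ g < h)

lemma rrPref_asymm {m : ℕ} {bid : Fin m → ℝ} {g h : Fin m}
    (h1 : rrPref bid g h) (h2 : rrPref bid h g) : False := by
  rcases h1 with h1 | ⟨e1, l1⟩ <;> rcases h2 with h2 | ⟨e2, l2⟩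
  · exact absurd h2 (not_lt.mpr h1.le)
  · exact absurd h1 (not_lt.mpr e2.ge)
  · exact absurd h2 (not_lt.mpr e1.ge)
  · exact absurd l2 (not_lt.mpr l1.le)

lemma rrPick_spec {m : ℕ} {bid : Fin m → ℝ} {S : Finset (Fin m)} {p : Fin m}
    (h : rrPick bid S = some p) : p ∈ S ∧ ∀ g ∈ S, g ≠ p → rrPref bid p g := by
  unfold rrPick at h
  split at h
  · rename_i hne
    obtain ⟨hmem, hmax⟩ := (S.exists_max_image (fun g => toLex (bid g, OrderDual.toDual g)) hne).choose_spec
    injection h with h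
    subst h
    refine ⟨hmem, fun g hg hgp => ?_⟩
    rcases Prod.Lex.le_iff.mp (hmax g hg) with hlt | ⟨heq, hle⟩
    · exact Or.inl hlt
    · exact Or.inr ⟨heq.symm,
        lt_of_le_of_ne (OrderDual.toDual_le_toDual.mp hle) (Ne.symm hgp)⟩
  · exact absurd h (by simp)

lemma rrPick_eq_none {m : ℕ} {bid : Fin m → ℝ} {S : Finset (Fin m)}
    (h : rrPick bid S = none) : S = ∅ := by
  unfold rrPick at h
  split at h
  · exact absurd h (by simp)
  · rename_i hne; exact not_nonempty_iff_eq_empty.mp hne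

lemma rrPick_empty {m : ℕ} (bid : Fin m → ℝ) : rrPick bid (∅ : Finset (Fin m)) = none := by
  simp [rrPick]

lemma rrState_fst_succ_none (n : ℕ) [NeZero n] {m : ℕ} (b : Fin n → Fin m → ℝ) (t : ℕ)
    (h : rrPick (b ⟨t % n, Nat.mod_lt t (Nat.pos_of_ne_zero (NeZero.ne n))⟩)
      (rrState n b t).1 = none) :
    (rrState n b (t + 1)).1 = (rrState n b t).1 := by
  simp only [rrState, h]

lemma rrState_fst_succ_some (n : ℕ) [NeZero n] {m : ℕ} (b : Fin n → Fin m → ℝ) (t : ℕ)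
    {g : Fin m}
    (h : rrPick (b ⟨t % n, Nat.mod_lt t (Nat.pos_of_ne_zero (NeZero.ne n))⟩)
      (rrState n b t).1 = some g) :
    (rrState n b (t + 1)).1 = (rrState n b t).1.erase g := by
  simp only [rrState, h]

lemma rrPick_cross_same {m : ℕ} {β : Fin m → ℝ} {S T : Finset (Fin m)} {p q : Fin m}
    (hp : rrPick β S = some p) (hq : rrPick β T = some q)
    (hpT : p ∈ T) (hqS : q ∈ S) : p = q := by
  by_contra hpq
  exact rrPref_asymm ((rrPick_spec hp).2 q hqS (Ne.symm hpq)) ((rrPick_spec hq).2 p hpT hpq)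

lemma rrPick_cross_slide {m : ℕ} {α β : Fin m → ℝ} {s : Fin m} {S T : Finset (Fin m)}
    {p q : Fin m}
    (hsame : ∀ g h : Fin m, g ≠ s → h ≠ s → (rrPref α g h ↔ rrPref β g h))
    (hslide : ∀ g : Fin m, rrPref α g s → rrPref β g s)
    (hp : rrPick α S = some p) (hq : rrPick β T = some q)
    (hpT : p ∈ T) (hqS : q ∈ S) : p = q ∨ p = s := by
  by_cases hpq : p = q
  · exact Or.inl hpq
  by_cases hps : p = s
  · exact Or.inr hps
  exfalso
  have h1 : rrPref α p q := (rrPick_spec hp).2 q hqS (Ne.symm hpq)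
  have h2 : rrPref β q p := (rrPick_spec hq).2 p hpT hpq
  by_cases hqs : q = s
  · subst hqs; exact rrPref_asymm (hslide p h1) h2
  · exact rrPref_asymm ((hsame p q hps hqs).mp h1) h2

lemma step_inv {m : ℕ} {S T : Finset (Fin m)} {s p q : Fin m}
    (hp : p ∈ S) (hq : q ∈ T)
    (hpq : p ∈ T → q ∈ S → p = q ∨ p = s)
    (h1 : S.card = T.card) (h2 : (S \ T).card ≤ 1)
    (h3 : S ≠ T → s ∉ S ∩ T) :
    (S.erase p).card = (T.erase q).card ∧
    ((S.erase p) \ (T.erase q)).card ≤ 1 ∧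
    ((S.erase p) ≠ (T.erase q) → s ∉ (S.erase p) ∩ (T.erase q)) := by
  refine ⟨by rw [card_erase_of_mem hp, card_erase_of_mem hq, h1], ?_, ?_⟩
  · rw [Finset.card_le_one]
    intro a ha b hb
    have key : ∀ z ∈ (S.erase p) \ (T.erase q), z ∈ S ∧ z ≠ p ∧ (z ∉ T ∨ z = q) := by
      intro z hz
      simp only [mem_sdiff, mem_erase] at hz
      obtain ⟨⟨hzp, hzS⟩, hz2⟩ := hz
      refine ⟨hzS, hzp, ?_⟩
      by_cases hzT : z ∈ T
      · right; by_contra hzq; exact hz2 ⟨hzq, hzT⟩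
      · left; exact hzT
    obtain ⟨haS, hap, ha'⟩ := key a ha
    obtain ⟨hbS, hbp, hb'⟩ := key b hb
    have hsd := Finset.card_le_one.mp h2
    rcases ha' with haT | haq <;> rcases hb' with hbT | hbq
    · exact hsd a (mem_sdiff.mpr ⟨haS, haT⟩) b (mem_sdiff.mpr ⟨hbS, hbT⟩)
    · exfalso
      subst hbq
      have hST : S ≠ T := fun e => haT (e ▸ haS)
      by_cases hpT : p ∈ T
      · rcases hpq hpT hbS with h | h
        · exact hbp h.symm
        · exact h3 hST (h ▸ mem_inter.mpr ⟨hp, hpT⟩)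
      · exact hap (hsd a (mem_sdiff.mpr ⟨haS, haT⟩) p (mem_sdiff.mpr ⟨hp, hpT⟩))
    · exfalso
      subst haq
      have hST : S ≠ T := fun e => hbT (e ▸ hbS)
      by_cases hpT : p ∈ T
      · rcases hpq hpT haS with h | h
        · exact hap h.symm
        · exact h3 hST (h ▸ mem_inter.mpr ⟨hp, hpT⟩)
      · exact hbp (hsd b (mem_sdiff.mpr ⟨hbS, hbT⟩) p (mem_sdiff.mpr ⟨hp, hpT⟩))
    · rw [haq, hbq]
  · intro hne hs
    rw [mem_inter, mem_erase, mem_erase] at hs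
    obtain ⟨⟨hsp, hsS⟩, ⟨hsq, hsT⟩⟩ := hs
    by_cases hST : S = T
    · rcases hpq (hST ▸ hp) (hST ▸ hq) with h | h
      · exact hne (by rw [hST, h])
      · exact hsp h.symm
    · exact h3 hST (mem_inter.mpr ⟨hsS, hsT⟩)

theorem roundRobin_partial_slide_available_goods {n m : ℕ} [NeZero n]
    (b : Fin n → Fin m → ℝ) (i : Fin n) (c : Fin m → ℝ) (s : Fin m)
    (hsame : ∀ g h : Fin m, g ≠ s → h ≠ s → (rrPref (b i) g h ↔ rrPref c g h))
    (hslide : ∀ g : Fin m, rrPref (b i) g s → rrPref c g s) :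
    ∀ t : ℕ,
      ((rrState n b t).1 \ (rrState n (Function.update b i c) t).1).card =
        ((rrState n (Function.update b i c) t).1 \ (rrState n b t).1).card ∧
      ((rrState n b t).1 \ (rrState n (Function.update b i c) t).1).card ≤ 1 := by
  suffices H : ∀ t : ℕ,
      (rrState n b t).1.card = (rrState n (Function.update b i c) t).1.card ∧
      ((rrState n b t).1 \ (rrState n (Function.update b i c) t).1).card ≤ 1 ∧
      ((rrState n b t).1 ≠ (rrState n (Function.update b i c) t).1 →
        s ∉ (rrState n b t).1 ∩ (rrState n (Function.update b i c) t).1) by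
    intro t
    obtain ⟨h1, h2, _⟩ := H t
    exact ⟨Finset.card_sdiff_comm h1, h2⟩
  intro t
  induction t with
  | zero => simp [rrState]
  | succ t ih =>
    obtain ⟨h1, h2, h3⟩ := ih
    rcases hp : rrPick (b ⟨t % n, Nat.mod_lt t (Nat.pos_of_ne_zero (NeZero.ne n))⟩)
        (rrState n b t).1 with _ | p
    · have hS : (rrState n b t).1 = ∅ := rrPick_eq_none hp
      have hT : (rrState n (Function.update b i c) t).1 = ∅ := by
        rw [← Finset.card_eq_zero, ← h1, hS, Finset.card_empty]
      have hq : rrPick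
          (Function.update b i c ⟨t % n, Nat.mod_lt t (Nat.pos_of_ne_zero (NeZero.ne n))⟩)
          (rrState n (Function.update b i c) t).1 = none := by
        rw [hT]; exact rrPick_empty _
      rw [rrState_fst_succ_none n b t hp, rrState_fst_succ_none n (Function.update b i c) t hq]
      exact ⟨h1, h2, h3⟩
    · rcases hq : rrPick
          (Function.update b i c ⟨t % n, Nat.mod_lt t (Nat.pos_of_ne_zero (NeZero.ne n))⟩)
          (rrState n (Function.update b i c) t).1 with _ | q
      · exfalso
        have hT : (rrState n (Function.update b i c) t).1 = ∅ := rrPick_eq_none hq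
        have hS : (rrState n b t).1 = ∅ := by
          rw [← Finset.card_eq_zero, h1, hT, Finset.card_empty]
        rw [hS, rrPick_empty] at hp
        exact absurd hp (by simp)
      · rw [rrState_fst_succ_some n b t hp,
            rrState_fst_succ_some n (Function.update b i c) t hq]
        have hpS := (rrPick_spec hp).1
        have hqT := (rrPick_spec hq).1
        have hpq : p ∈ (rrState n (Function.update b i c) t).1 →
            q ∈ (rrState n b t).1 → p = q ∨ p = s := by
          intro hpT hqS
          by_cases hj : (⟨t % n, Nat.mod_lt t (Nat.pos_of_ne_zero (NeZero.ne n))⟩ : Fin n) = i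
          · rw [hj] at hp hq
            rw [Function.update_self] at hq
            exact rrPick_cross_slide hsame hslide hp hq hpT hqS
          · rw [Function.update_of_ne hj] at hq
            exact Or.inl (rrPick_cross_same hp hq hpT hqS)
        exact step_inv hpS hqT hpq h1 h2 h3
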